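/- 48·√(2/π)·∫₀^{∞} e^{-2x²}·erf(x)² dx = 24·(1 - (2/π)·arcsec(3)). -/

import Mathlib

open Real MeasureTheory
open Set

/-- The error function. -/
noncomputable def erf (x : ℝ) : ℝ :=
  2 / Real.sqrt π * ∫ t in (0:ℝ)..x, Real.exp (-t^2)

lemma erf_hasDerivAt (y : ℝ) : HasDerivAt erf (2 / Real.sqrt π * Real.exp (-y^2)) y := by
  have h := ((continuous_exp.comp (by continuity : Continuous fun t : ℝ => -t^2)).integral_hasStrictDerivAt 0 y).hasDerivAt
  exact (h.const_mul (2 / Real.sqrt π))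

lemma erf_continuous : Continuous erf :=
  continuous_iff_continuousAt.2 fun y => (erf_hasDerivAt y).continuousAt

lemma erf_zero : erf 0 = 0 := by simp [erf]

lemma abs_erf_le_two (y : ℝ) : |erf y| ≤ 2 := by
  have hint : Integrable (fun t : ℝ => Real.exp (-1 * t^2)) := integrable_exp_neg_mul_sq one_pos
  have h1 : |∫ t in (0:ℝ)..y, Real.exp (-t^2)| ≤ Real.sqrt π := by
    have habs : |∫ t in (0:ℝ)..y, Real.exp (-t^2)| ≤ ∫ t in Set.uIoc 0 y, Real.exp (-t^2) := by
      rw [intervalIntegral.intervalIntegral_eq_integral_uIoc, smul_eq_mul, abs_mul]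
      have : |(if (0:ℝ) ≤ y then (1:ℝ) else -1)| = 1 := by split_ifs <;> norm_num
      rw [this, one_mul]
      rw [abs_of_nonneg (integral_nonneg fun t => (Real.exp_pos _).le)]
    refine habs.trans ?_
    have h2 : ∫ t in Set.uIoc 0 y, Real.exp (-1*t^2) ≤ ∫ t : ℝ, Real.exp (-1*t^2) :=
      setIntegral_le_integral (integrable_exp_neg_mul_sq one_pos)
        (Filter.Eventually.of_forall fun t => (Real.exp_pos _).le)
    have h3 : (∫ t : ℝ, Real.exp (-1*t^2)) = Real.sqrt π := by
      rw [integral_gaussian]; norm_num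
    simp only [neg_mul, one_mul] at h2 h3 ⊢
    linarith
  have hs : (0:ℝ) < Real.sqrt π := Real.sqrt_pos.2 Real.pi_pos
  calc |erf y| = 2 / Real.sqrt π * |∫ t in (0:ℝ)..y, Real.exp (-t^2)| := by
        rw [erf, abs_mul, abs_of_pos (by positivity)]
    _ ≤ 2 / Real.sqrt π * Real.sqrt π := by
        apply mul_le_mul_of_nonneg_left h1 (by positivity)
    _ = 2 := by field_simp

lemma moment2 {b : ℝ} (hb : 0 < b) :
    ∫ x in Ioi (0:ℝ), x^2 * Real.exp (-b * x^2)
      = Real.sqrt π / (4 * b * Real.sqrt b) := by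
  have h := integral_rpow_mul_exp_neg_mul_rpow (p := 2) (q := 2) (b := b)
    (by norm_num) (by norm_num) hb
  have heq : ∀ x ∈ Ioi (0:ℝ), x ^ (2:ℝ) * Real.exp (-b * x ^ (2:ℝ))
      = x^2 * Real.exp (-b * x^2) := by
    intro x hx
    rw [Real.rpow_two x]
  rw [setIntegral_congr_fun measurableSet_Ioi heq] at h
  rw [h]
  have hG : Real.Gamma ((2+1)/2 : ℝ) = Real.sqrt π / 2 := by
    have : ((2+1)/2 : ℝ) = 1/2 + 1 := by norm_num
    rw [this, Real.Gamma_add_one (by norm_num), Real.Gamma_one_half_eq]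
    ring
  have hbp : (b : ℝ) ^ (-(2+1)/2 : ℝ) = 1 / (b * Real.sqrt b) := by
    rw [show (-(2+1)/2 : ℝ) = -(1 + 1/2) by norm_num, Real.rpow_neg hb.le,
      Real.rpow_add hb, Real.rpow_one, ← Real.sqrt_eq_rpow]
    rw [one_div]
  rw [hG, hbp]
  have hsb : (0:ℝ) < Real.sqrt b := Real.sqrt_pos.2 hb
  rw [div_mul_eq_mul_div, one_mul, div_mul_eq_mul_div]
  rw [eq_div_iff (by positivity), div_mul_eq_mul_div, div_eq_iff (by positivity)]
  ring

lemma integrable_x2_exp {p : ℝ} (hp : 0 < p) :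
    IntegrableOn (fun x : ℝ => x^2 * Real.exp (-p * x^2)) (Ioi 0) := by
  refine (integrableOn_rpow_mul_exp_neg_mul_sq hp (by norm_num : (-1:ℝ) < 2)).congr_fun
    (fun x hx => ?_) measurableSet_Ioi
  simp [Real.rpow_two]

lemma L_deriv {p : ℝ} (hp : 0 < p) (b₀ : ℝ) :
    HasDerivAt (fun b => ∫ x in Ioi (0:ℝ), x * Real.exp (-p*x^2) * erf (b*x))
      (1 / (2 * (p + b₀^2) * Real.sqrt (p + b₀^2))) b₀ := by
  have hc : 0 < p + b₀^2 := by positivity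
  have key := hasDerivAt_integral_of_dominated_loc_of_deriv_le
    (μ := volume.restrict (Ioi 0))
    (F := fun b x => x * Real.exp (-p*x^2) * erf (b*x))
    (F' := fun b x => x * Real.exp (-p*x^2) * (2 / Real.sqrt π * Real.exp (-(b*x)^2) * x))
    (x₀ := b₀) (bound := fun x => 2 / Real.sqrt π * (x^2 * Real.exp (-p*x^2)))
    (Metric.ball_mem_nhds _ one_pos) ?_ ?_ ?_ ?_ ?_ ?_
  · have hval : (∫ x in Ioi (0:ℝ), x * Real.exp (-p*x^2) *
        (2 / Real.sqrt π * Real.exp (-(b₀*x)^2) * x))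
        = 1 / (2 * (p + b₀^2) * Real.sqrt (p + b₀^2)) := by
      have heq : ∀ x ∈ Ioi (0:ℝ), x * Real.exp (-p*x^2) *
          (2 / Real.sqrt π * Real.exp (-(b₀*x)^2) * x)
          = 2 / Real.sqrt π * (x^2 * Real.exp (-(p+b₀^2) * x^2)) := by
        intro x hx
        rw [show -(p+b₀^2) * x^2 = -p*x^2 + -(b₀*x)^2 by ring, Real.exp_add]
        ring
      rw [setIntegral_congr_fun measurableSet_Ioi heq, MeasureTheory.integral_const_mul, moment2 hc]
      have hπ : (0:ℝ) < Real.sqrt π := Real.sqrt_pos.2 Real.pi_pos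
      have hsc : (0:ℝ) < Real.sqrt (p + b₀^2) := Real.sqrt_pos.2 hc
      field_simp
      ring
    rw [← hval]
    exact key.2
  · exact Filter.Eventually.of_forall fun b =>
      ((by continuity : Continuous fun x : ℝ => x * Real.exp (-p*x^2)).mul
        (erf_continuous.comp (by continuity))).aestronglyMeasurable.restrict
  · refine Integrable.mono' (((integrable_mul_exp_neg_mul_sq hp).const_mul 2).restrict)
      (((by continuity : Continuous fun x : ℝ => x * Real.exp (-p*x^2)).mul
        (erf_continuous.comp (by continuity))).aestronglyMeasurable.restrict) ?_
    rw [ae_restrict_iff' measurableSet_Ioi]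
    refine Filter.Eventually.of_forall fun x hx => ?_
    have hx0 : (0:ℝ) < x := hx
    have := abs_erf_le_two (b₀ * x)
    calc ‖x * Real.exp (-p*x^2) * erf (b₀*x)‖
        = x * Real.exp (-p*x^2) * |erf (b₀*x)| := by
          rw [Real.norm_eq_abs, abs_mul, abs_mul, abs_of_pos hx0,
            abs_of_pos (Real.exp_pos _)]
      _ ≤ x * Real.exp (-p*x^2) * 2 := by
          apply mul_le_mul_of_nonneg_left this (by positivity)
      _ = 2 * (x * Real.exp (-p*x^2)) := by ring
  · exact ((by continuity : Continuous fun x : ℝ => x * Real.exp (-p*x^2)).mul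
      (by continuity : Continuous fun x : ℝ =>
        2 / Real.sqrt π * Real.exp (-(b₀*x)^2) * x)).aestronglyMeasurable.restrict
  · rw [ae_restrict_iff' measurableSet_Ioi]
    refine Filter.Eventually.of_forall fun x hx b _ => ?_
    have hx0 : (0:ℝ) < x := hx
    have hπ : (0:ℝ) < Real.sqrt π := Real.sqrt_pos.2 Real.pi_pos
    have hexp : Real.exp (-(b*x)^2) ≤ 1 := by
      rw [Real.exp_le_one_iff]; exact neg_nonpos.mpr (sq_nonneg _)
    calc ‖x * Real.exp (-p*x^2) * (2 / Real.sqrt π * Real.exp (-(b*x)^2) * x)‖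
        = 2 / Real.sqrt π * Real.exp (-(b*x)^2) * (x^2 * Real.exp (-p*x^2)) := by
          rw [Real.norm_eq_abs, abs_of_nonneg (by positivity)]
          ring
      _ ≤ 2 / Real.sqrt π * 1 * (x^2 * Real.exp (-p*x^2)) := by
          apply mul_le_mul_of_nonneg_right _ (by positivity)
          apply mul_le_mul_of_nonneg_left hexp (by positivity)
      _ = 2 / Real.sqrt π * (x^2 * Real.exp (-p*x^2)) := by ring
  · exact (integrable_x2_exp hp).const_mul _
  · refine Filter.Eventually.of_forall fun x b _ => ?_
    have h1 : HasDerivAt (fun b : ℝ => b * x) x b := hasDerivAt_mul_const x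
    have h2 := (erf_hasDerivAt (b*x)).comp b h1
    have h3 := h2.const_mul (x * Real.exp (-p*x^2))
    exact h3

lemma L_int {p : ℝ} (hp : 0 < p) :
    ∫ x in Ioi (0:ℝ), x * Real.exp (-p*x^2) * erf x
      = 1 / (2 * p * Real.sqrt (p+1)) := by
  have hcont : Continuous fun b : ℝ => 1 / (2 * (p + b^2) * Real.sqrt (p + b^2)) := by
    apply continuous_const.div
    · continuity
    · intro b
      have hc : 0 < p + b^2 := by positivity
      have := Real.sqrt_pos.2 hc
      positivity
  have hFTC : ∫ b in (0:ℝ)..1, 1 / (2 * (p + b^2) * Real.sqrt (p + b^2))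
      = (∫ x in Ioi (0:ℝ), x * Real.exp (-p*x^2) * erf (1*x))
        - ∫ x in Ioi (0:ℝ), x * Real.exp (-p*x^2) * erf (0*x) :=
    intervalIntegral.integral_eq_sub_of_hasDerivAt (fun b _ => L_deriv hp b)
      (hcont.intervalIntegrable 0 1)
  have hH : ∀ b : ℝ, HasDerivAt (fun b : ℝ => b / (2 * p * Real.sqrt (p + b^2)))
      (1 / (2 * (p + b^2) * Real.sqrt (p + b^2))) b := by
    intro b
    have hc : 0 < p + b^2 := by positivity
    have hsc : 0 < Real.sqrt (p + b^2) := Real.sqrt_pos.2 hc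
    have hinner : HasDerivAt (fun b : ℝ => p + b^2) (2*b) b := by
      simpa using (hasDerivAt_pow 2 b).const_add p
    have hs : HasDerivAt (fun b : ℝ => Real.sqrt (p + b^2)) (b / Real.sqrt (p + b^2)) b := by
      have := (Real.hasDerivAt_sqrt (ne_of_gt hc)).comp b hinner
      refine this.congr_deriv ?_
      field_simp
    have hden : HasDerivAt (fun b : ℝ => 2 * p * Real.sqrt (p + b^2))
        (2 * p * (b / Real.sqrt (p + b^2))) b := hs.const_mul _
    have hdiv := (hasDerivAt_id b).div hden (by positivity)
    refine hdiv.congr_deriv ?_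
    have hsq : Real.sqrt (p + b^2) ^ 2 = p + b^2 := Real.sq_sqrt hc.le
    simp only [id]
    have h3 : Real.sqrt (p + b^2) ^ 3 = (p + b^2) * Real.sqrt (p + b^2) := by
      rw [pow_succ, hsq]
    field_simp
    ring_nf
    rw [hsq]
    ring
  have hFTC2 : ∫ b in (0:ℝ)..1, 1 / (2 * (p + b^2) * Real.sqrt (p + b^2))
      = 1 / (2 * p * Real.sqrt (p+1)) - 0 / (2 * p * Real.sqrt (p+0^2)) := by
    have := intervalIntegral.integral_eq_sub_of_hasDerivAt (fun b _ => hH b)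
      (hcont.intervalIntegrable 0 1)
    rw [this]
    norm_num
  have h0 : (∫ x in Ioi (0:ℝ), x * Real.exp (-p*x^2) * erf (0*x)) = 0 := by
    simp [erf_zero]
  have h1 : (∫ x in Ioi (0:ℝ), x * Real.exp (-p*x^2) * erf (1*x))
      = ∫ x in Ioi (0:ℝ), x * Real.exp (-p*x^2) * erf x := by
    simp
  rw [hFTC2, h0, h1] at hFTC
  have : (0:ℝ) / (2 * p * Real.sqrt (p + 0^2)) = 0 := by norm_num
  rw [this, sub_zero, sub_zero] at hFTC
  exact hFTC.symm

lemma J_deriv (a₀ : ℝ) :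
    HasDerivAt (fun a => ∫ x in Ioi (0:ℝ), Real.exp (-2*x^2) * erf x * erf (a*x))
      (1 / (Real.sqrt π * (2 + a₀^2) * Real.sqrt (3 + a₀^2))) a₀ := by
  have hπ : (0:ℝ) < Real.sqrt π := Real.sqrt_pos.2 Real.pi_pos
  have hc : (0:ℝ) < 2 + a₀^2 := by positivity
  have key := hasDerivAt_integral_of_dominated_loc_of_deriv_le
    (μ := volume.restrict (Ioi 0))
    (F := fun a x => Real.exp (-2*x^2) * erf x * erf (a*x))
    (F' := fun a x => Real.exp (-2*x^2) * erf x * (2 / Real.sqrt π * Real.exp (-(a*x)^2) * x))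
    (x₀ := a₀) (bound := fun x => 4 / Real.sqrt π * (x * Real.exp (-2*x^2)))
    (Metric.ball_mem_nhds _ one_pos) ?_ ?_ ?_ ?_ ?_ ?_
  · have hval : (∫ x in Ioi (0:ℝ), Real.exp (-2*x^2) * erf x *
        (2 / Real.sqrt π * Real.exp (-(a₀*x)^2) * x))
        = 1 / (Real.sqrt π * (2 + a₀^2) * Real.sqrt (3 + a₀^2)) := by
      have heq : ∀ x ∈ Ioi (0:ℝ), Real.exp (-2*x^2) * erf x *
          (2 / Real.sqrt π * Real.exp (-(a₀*x)^2) * x)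
          = 2 / Real.sqrt π * (x * Real.exp (-(2+a₀^2) * x^2) * erf x) := by
        intro x hx
        rw [show -(2+a₀^2) * x^2 = -2*x^2 + -(a₀*x)^2 by ring, Real.exp_add]
        ring
      rw [setIntegral_congr_fun measurableSet_Ioi heq, MeasureTheory.integral_const_mul,
        L_int hc]
      have h31 : (2:ℝ) + a₀^2 + 1 = 3 + a₀^2 := by ring
      rw [h31]
      have hs3 : (0:ℝ) < Real.sqrt (3 + a₀^2) := Real.sqrt_pos.2 (by positivity)
      field_simp
    rw [← hval]
    exact key.2
  · exact Filter.Eventually.of_forall fun a =>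
      (((by continuity : Continuous fun x : ℝ => Real.exp (-2*x^2)).mul erf_continuous).mul
        (erf_continuous.comp (by continuity))).aestronglyMeasurable.restrict
  · refine Integrable.mono' (((integrable_exp_neg_mul_sq two_pos).const_mul 4).restrict)
      ((((by continuity : Continuous fun x : ℝ => Real.exp (-2*x^2)).mul erf_continuous).mul
        (erf_continuous.comp (by continuity))).aestronglyMeasurable.restrict) ?_
    refine Filter.Eventually.of_forall fun x => ?_
    have h1 := abs_erf_le_two x
    have h2 := abs_erf_le_two (a₀ * x)
    have he : (0:ℝ) < Real.exp (-2*x^2) := Real.exp_pos _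
    calc ‖Real.exp (-2*x^2) * erf x * erf (a₀*x)‖
        = Real.exp (-2*x^2) * |erf x| * |erf (a₀*x)| := by
          rw [Real.norm_eq_abs, abs_mul, abs_mul, abs_of_pos he]
      _ ≤ Real.exp (-2*x^2) * 2 * 2 := by
          apply mul_le_mul (mul_le_mul_of_nonneg_left h1 he.le) h2 (abs_nonneg _)
          positivity
      _ = 4 * Real.exp (-2*x^2) := by ring
  · exact (((by continuity : Continuous fun x : ℝ => Real.exp (-2*x^2)).mul erf_continuous).mul
      (by continuity : Continuous fun x : ℝ =>
        2 / Real.sqrt π * Real.exp (-(a₀*x)^2) * x)).aestronglyMeasurable.restrict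
  · rw [ae_restrict_iff' measurableSet_Ioi]
    refine Filter.Eventually.of_forall fun x hx a _ => ?_
    have hx0 : (0:ℝ) < x := hx
    have h1 := abs_erf_le_two x
    have hexp : Real.exp (-(a*x)^2) ≤ 1 := by
      rw [Real.exp_le_one_iff]; exact neg_nonpos.mpr (sq_nonneg _)
    have he : (0:ℝ) < Real.exp (-2*x^2) := Real.exp_pos _
    calc ‖Real.exp (-2*x^2) * erf x * (2 / Real.sqrt π * Real.exp (-(a*x)^2) * x)‖
        = |erf x| * Real.exp (-(a*x)^2) * (2 / Real.sqrt π * (x * Real.exp (-2*x^2))) := by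
          rw [Real.norm_eq_abs, abs_mul, abs_mul, abs_of_pos he,
            abs_of_nonneg (by positivity : (0:ℝ) ≤ 2 / Real.sqrt π * Real.exp (-(a*x)^2) * x)]
          ring
      _ ≤ 2 * 1 * (2 / Real.sqrt π * (x * Real.exp (-2*x^2))) := by
          apply mul_le_mul_of_nonneg_right _ (by positivity)
          exact mul_le_mul h1 hexp (Real.exp_pos _).le (by norm_num)
      _ = 4 / Real.sqrt π * (x * Real.exp (-2*x^2)) := by ring
  · exact ((integrable_mul_exp_neg_mul_sq two_pos).restrict).const_mul _
  · refine Filter.Eventually.of_forall fun x a _ => ?_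
    have h1 : HasDerivAt (fun a : ℝ => a * x) x a := hasDerivAt_mul_const x
    have h2 := (erf_hasDerivAt (a*x)).comp a h1
    exact h2.const_mul (Real.exp (-2*x^2) * erf x)

lemma J_val :
    ∫ x in Ioi (0:ℝ), Real.exp (-2*x^2) * erf x * erf x
      = Real.sqrt 2 / (2 * Real.sqrt π) * Real.arctan (Real.sqrt 8)⁻¹ := by
  have hπ : (0:ℝ) < Real.sqrt π := Real.sqrt_pos.2 Real.pi_pos
  have hcont : Continuous fun a : ℝ =>
      1 / (Real.sqrt π * (2 + a^2) * Real.sqrt (3 + a^2)) := by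
    apply continuous_const.div
    · continuity
    · intro a
      have h3 : (0:ℝ) < Real.sqrt (3 + a^2) := Real.sqrt_pos.2 (by positivity)
      positivity
  have hFTC : ∫ a in (0:ℝ)..1, 1 / (Real.sqrt π * (2 + a^2) * Real.sqrt (3 + a^2))
      = (∫ x in Ioi (0:ℝ), Real.exp (-2*x^2) * erf x * erf (1*x))
        - ∫ x in Ioi (0:ℝ), Real.exp (-2*x^2) * erf x * erf (0*x) :=
    intervalIntegral.integral_eq_sub_of_hasDerivAt (fun a _ => J_deriv a)
      (hcont.intervalIntegrable 0 1)
  have hH : ∀ a : ℝ, HasDerivAt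
      (fun a : ℝ => Real.sqrt 2 / (2 * Real.sqrt π) *
        Real.arctan (a / Real.sqrt (2*(a^2+3))))
      (1 / (Real.sqrt π * (2 + a^2) * Real.sqrt (3 + a^2))) a := by
    intro a
    have hc : (0:ℝ) < 2*(a^2+3) := by positivity
    have hs : (0:ℝ) < Real.sqrt (2*(a^2+3)) := Real.sqrt_pos.2 hc
    have hsq : Real.sqrt (2*(a^2+3)) ^ 2 = 2*(a^2+3) := Real.sq_sqrt hc.le
    have hq2 : Real.sqrt 2 ^ 2 = 2 := Real.sq_sqrt (by norm_num)
    have hA2 : Real.sqrt (a^2+3) ^ 2 = a^2+3 := Real.sq_sqrt (by positivity)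
    have hinner : HasDerivAt (fun a : ℝ => 2*(a^2+3)) (4*a) a := by
      have h := ((hasDerivAt_pow 2 a).add_const 3).const_mul 2
      refine h.congr_deriv ?_
      push_cast
      ring
    have hsd : HasDerivAt (fun a : ℝ => Real.sqrt (2*(a^2+3)))
        (2*a / Real.sqrt (2*(a^2+3))) a := by
      have := (Real.hasDerivAt_sqrt (ne_of_gt hc)).comp a hinner
      refine this.congr_deriv ?_
      field_simp
      ring
    have hu : HasDerivAt (fun a : ℝ => a / Real.sqrt (2*(a^2+3)))
        (6 / Real.sqrt (2*(a^2+3)) ^ 3) a := by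
      have hdiv := (hasDerivAt_id a).div hsd (ne_of_gt hs)
      refine hdiv.congr_deriv ?_
      simp only [id, one_mul]
      have e1 : Real.sqrt (2*(a^2+3)) - a * (2*a / Real.sqrt (2*(a^2+3)))
          = 6 / Real.sqrt (2*(a^2+3)) := by
        field_simp
        linear_combination hsq
      rw [e1, div_div, ← pow_succ']
    have harc := (Real.hasDerivAt_arctan (a / Real.sqrt (2*(a^2+3)))).comp a hu
    have hfinal := harc.const_mul (Real.sqrt 2 / (2 * Real.sqrt π))
    refine hfinal.congr_deriv ?_
    have husq : (a / Real.sqrt (2*(a^2+3)))^2 = a^2 / (2*(a^2+3)) := by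
      rw [div_pow, hsq]
    rw [husq]
    have h3 : Real.sqrt (2*(a^2+3)) ^ 3 = (2*(a^2+3)) * Real.sqrt (2*(a^2+3)) := by
      rw [pow_succ, hsq]
    have hs2 : Real.sqrt (2*(a^2+3)) = Real.sqrt 2 * Real.sqrt (a^2+3) := by
      rw [← Real.sqrt_mul (by norm_num)]
    have hs32 : Real.sqrt (3+a^2) = Real.sqrt (a^2+3) := by ring_nf
    have hA : (0:ℝ) < Real.sqrt (a^2+3) := Real.sqrt_pos.2 (by positivity)
    have hQ : (0:ℝ) < Real.sqrt 2 := Real.sqrt_pos.2 (by norm_num)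
    rw [hs32]
    field_simp
    rw [h3, hs2]
    ring
  have hFTC2 : ∫ a in (0:ℝ)..1, 1 / (Real.sqrt π * (2 + a^2) * Real.sqrt (3 + a^2))
      = Real.sqrt 2 / (2 * Real.sqrt π) * Real.arctan (Real.sqrt 8)⁻¹ := by
    rw [intervalIntegral.integral_eq_sub_of_hasDerivAt (fun a _ => hH a)
      (hcont.intervalIntegrable 0 1)]
    rw [show (2:ℝ)*((1:ℝ)^2+3) = 8 by norm_num, show (2:ℝ)*((0:ℝ)^2+3) = 6 by norm_num]
    rw [zero_div, Real.arctan_zero, mul_zero, sub_zero, one_div]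
  have h0 : (∫ x in Ioi (0:ℝ), Real.exp (-2*x^2) * erf x * erf (0*x)) = 0 := by
    simp [erf_zero]
  have h1 : (∫ x in Ioi (0:ℝ), Real.exp (-2*x^2) * erf x * erf (1*x))
      = ∫ x in Ioi (0:ℝ), Real.exp (-2*x^2) * erf x * erf x := by
    simp
  rw [hFTC2, h0, h1, sub_zero] at hFTC
  exact hFTC.symm

theorem stmt_13 :
    48 * Real.sqrt (2/π) *
        (∫ x in Set.Ioi (0:ℝ), Real.exp (-2 * x^2) * erf x ^ 2)
      = 24 * (1 - 2/π * Real.arccos (1/3)) := by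
  have hπ : (0:ℝ) < π := Real.pi_pos
  have hsπ : (0:ℝ) < Real.sqrt π := Real.sqrt_pos.2 hπ
  have hI : (∫ x in Set.Ioi (0:ℝ), Real.exp (-2 * x^2) * erf x ^ 2)
      = Real.sqrt 2 / (2 * Real.sqrt π) * Real.arctan (Real.sqrt 8)⁻¹ := by
    rw [← J_val]
    refine setIntegral_congr_fun measurableSet_Ioi fun x _ => ?_
    ring
  rw [hI]
  have h8 : (0:ℝ) < Real.sqrt 8 := Real.sqrt_pos.2 (by norm_num)
  have harccos : Real.arccos (1/3 : ℝ) = Real.arctan (Real.sqrt 8) := by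
    rw [Real.arccos_eq_arctan (by norm_num : (0:ℝ) < 1/3)]
    congr 1
    rw [show (1:ℝ) - (1/3)^2 = 8/9 by norm_num,
      Real.sqrt_div (by norm_num : (0:ℝ) ≤ 8) 9,
      show Real.sqrt 9 = 3 by rw [show (9:ℝ) = 3^2 by norm_num, Real.sqrt_sq (by norm_num : (0:ℝ) ≤ 3)]]
    field_simp
  have hinv : Real.arctan (Real.sqrt 8)⁻¹ = π/2 - Real.arctan (Real.sqrt 8) :=
    Real.arctan_inv_of_pos h8
  have hsqrt : Real.sqrt (2/π) = Real.sqrt 2 / Real.sqrt π :=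
    Real.sqrt_div (by norm_num) π
  rw [hinv, harccos, hsqrt]
  have h2 : Real.sqrt 2 * Real.sqrt 2 = 2 := Real.mul_self_sqrt (by norm_num)
  have hpp : Real.sqrt π * Real.sqrt π = π := Real.mul_self_sqrt hπ.le
  calc 48 * (Real.sqrt 2 / Real.sqrt π) *
        (Real.sqrt 2 / (2 * Real.sqrt π) * (π/2 - Real.arctan (Real.sqrt 8)))
      = 24 * ((Real.sqrt 2 * Real.sqrt 2) * (π/2 - Real.arctan (Real.sqrt 8)))
          / (Real.sqrt π * Real.sqrt π) := by ring
    _ = 24 * (2 * (π/2 - Real.arctan (Real.sqrt 8))) / π := by rw [h2, hpp]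
    _ = 24 * (1 - 2/π * Real.arctan (Real.sqrt 8)) := by field_simp
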